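/- Let δ ∈ (0, 1/2), A > 0, C₀ > 0 and η ∈ (0, 1). Let f : ℝ → ℝ be twice continuously differentiable with |f(y)| ≤ C₀(1 + |y|)^(−δ), |f'(y)| ≤ C₀(1 + |y|)^(−1−δ) and |f''(y)| ≤ C₀(1 + |y|)^(−2−δ) for all y ∈ ℝ. Let χ : ℝ → [0, 1] be continuously differentiable with χ(y) = 0 for y ∉ [0, A], and let ζ : [0, A] → ℝ be continuously differentiable with 1 + y·ζ(y) ≥ η for all y ∈ [0, A]. Then there is a constant C > 0 such that for every h ∈ (0, 1]: ∫₀^A | d/dy [ χ(y)·( f((y + y²ζ(y))/h) − f(y/h) ) ] |² dy ≤ C·h^(2δ). -/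

import Mathlib

set_option maxHeartbeats 1000000

open Set MeasureTheory Real intervalIntegral

private lemma mvt_abs_bound {g g' : ℝ → ℝ} (hg : ∀ y : ℝ, HasDerivAt g (g' y) y)
    {m B a b : ℝ} (hbd : ∀ x : ℝ, m ≤ x → |g' x| ≤ B)
    (ha : m ≤ a) (hb : m ≤ b) : |g b - g a| ≤ B * |b - a| := by
  have := Convex.norm_image_sub_le_of_norm_hasDerivWithin_le
    (f := g) (f' := g') (s := Set.Ici m) (C := B)
    (fun x hx => (hg x).hasDerivWithinAt)
    (fun x hx => by simpa [Real.norm_eq_abs] using hbd x hx)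
    (convex_Ici m) (Set.mem_Ici.2 ha) (Set.mem_Ici.2 hb)
  simpa [Real.norm_eq_abs] using this

/-- Derivative (Ḣ¹) part of the approximation lemma: for `f ∈ S^{−δ}` (with two
derivatives), a `C¹` cut-off `χ` supported in `[0, A]`, and a `C¹` perturbation `ζ`
with `1 + yζ(y) ≥ η > 0` on `[0, A]`, one has
`∫₀^A |d/dy (χ(y)·(f((y + y²ζ(y))/h) − f(y/h)))|² dy ≤ C·h^(2δ)` uniformly in
`h ∈ (0, 1]`. -/
theorem approximation_lemma_H1 (δ A C₀ η : ℝ)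
    (hδ : δ ∈ Set.Ioo (0 : ℝ) (1 / 2)) (hA : 0 < A) (hC₀ : 0 < C₀)
    (hη : η ∈ Set.Ioo (0 : ℝ) 1)
    (f f' f'' : ℝ → ℝ)
    (hf : ∀ y : ℝ, HasDerivAt f (f' y) y)
    (hf' : ∀ y : ℝ, HasDerivAt f' (f'' y) y)
    (hf''cont : Continuous f'')
    (hfb : ∀ y : ℝ, |f y| ≤ C₀ * (1 + |y|) ^ (-δ))
    (hf'b : ∀ y : ℝ, |f' y| ≤ C₀ * (1 + |y|) ^ (-1 - δ))
    (hf''b : ∀ y : ℝ, |f'' y| ≤ C₀ * (1 + |y|) ^ (-2 - δ))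
    (χ χ' : ℝ → ℝ)
    (hχ : ∀ y : ℝ, HasDerivAt χ (χ' y) y) (hχ'cont : Continuous χ')
    (hχ01 : ∀ y : ℝ, χ y ∈ Set.Icc (0 : ℝ) 1)
    (hχsupp : ∀ y : ℝ, y ∉ Set.Icc (0 : ℝ) A → χ y = 0)
    (ζ ζ' : ℝ → ℝ)
    (hζ : ∀ y ∈ Set.Icc (0 : ℝ) A, HasDerivWithinAt ζ (ζ' y) (Set.Icc 0 A) y)
    (hζ'cont : ContinuousOn ζ' (Set.Icc 0 A))
    (hζη : ∀ y ∈ Set.Icc (0 : ℝ) A, η ≤ 1 + y * ζ y) :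
    ∃ C : ℝ, 0 < C ∧ ∀ h ∈ Set.Ioc (0 : ℝ) 1,
      (∫ y in (0 : ℝ)..A,
        |derivWithin (fun y => χ y * (f ((y + y ^ 2 * ζ y) / h) - f (y / h)))
            (Set.Icc 0 A) y| ^ 2)
        ≤ C * h ^ (2 * δ) := by
  obtain ⟨hδ0, hδh⟩ := hδ
  obtain ⟨hη0, hη1⟩ := hη
  have h2δ : 2 * δ < 1 := by linarith
  have hfc : Continuous f := continuous_iff_continuousAt.2 fun x => (hf x).continuousAt
  have hf'c : Continuous f' := continuous_iff_continuousAt.2 fun x => (hf' x).continuousAt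
  have hχc : Continuous χ := continuous_iff_continuousAt.2 fun x => (hχ x).continuousAt
  have hζc : ContinuousOn ζ (Set.Icc 0 A) := fun y hy => (hζ y hy).continuousWithinAt
  obtain ⟨K₀, hK₀⟩ := isCompact_Icc.exists_bound_of_continuousOn hζc
  obtain ⟨K₁, hK₁⟩ := isCompact_Icc.exists_bound_of_continuousOn hζ'cont
  obtain ⟨K₂', hK₂'⟩ :=
    isCompact_Icc.exists_bound_of_continuousOn (hχ'cont.continuousOn (s := Set.Icc (0:ℝ) A))
  set K : ℝ := max 1 (max K₀ (max K₁ K₂')) with hKdef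
  have hK1 : (1:ℝ) ≤ K := le_max_left _ _
  have hK0 : (0:ℝ) < K := by linarith
  have hKζ : ∀ y ∈ Set.Icc (0:ℝ) A, |ζ y| ≤ K := fun y hy =>
    le_trans (by simpa using hK₀ y hy)
      (le_trans (le_max_left _ _) (le_max_right _ _))
  have hKζ' : ∀ y ∈ Set.Icc (0:ℝ) A, |ζ' y| ≤ K := fun y hy =>
    le_trans (by simpa using hK₁ y hy)
      (le_trans (le_trans (le_max_left _ _) (le_max_right K₀ _)) (le_max_right 1 _))
  have hKχ' : ∀ y ∈ Set.Icc (0:ℝ) A, |χ' y| ≤ K := fun y hy =>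
    le_trans (by simpa using hK₂' y hy)
      (le_trans (le_trans (le_max_right _ _) (le_max_right K₀ _)) (le_max_right 1 _))
  set K₃ : ℝ := 2*K + A*K with hK₃def
  set K₂ : ℝ := 1 + A*K₃ with hK₂def
  have hK₃0 : (0:ℝ) < K₃ := by rw [hK₃def]; positivity
  have hK₂0 : (0:ℝ) < K₂ := by rw [hK₂def]; positivity
  set M : ℝ := C₀*K*K*A/η + C₀*K*K₂/η^2 + C₀*K₃/η with hMdef
  have hM0 : (0:ℝ) < M := by rw [hMdef]; positivity
  have h1δ : (0:ℝ) < 1 - 2*δ := by linarith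
  refine ⟨M^2 * η ^ (-(2*δ)) * A ^ (1 - 2*δ) / (1 - 2*δ), by positivity, ?_⟩
  intro h hh
  obtain ⟨hh0, hh1⟩ := hh
  set S : Set ℝ := Set.Icc (0:ℝ) A with hSdef
  set D : ℝ → ℝ := fun y => χ' y * (f ((y + y^2*ζ y)/h) - f (y/h)) +
    χ y * (f' ((y + y^2*ζ y)/h) * ((1 + (2*y^1*ζ y + y^2*ζ' y))/h) - f' (y/h) * (1/h))
    with hDdef
  -- Step A : the derivative within S is D
  have hderiv : ∀ y ∈ S, derivWithin
      (fun y => χ y * (f ((y + y ^ 2 * ζ y) / h) - f (y / h))) S y = D y := by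
    intro y hy
    have h1 : HasDerivWithinAt (fun z : ℝ => z ^ 2 * ζ z)
        ((2:ℝ) * y ^ 1 * ζ y + y ^ 2 * ζ' y) S y := by
      simpa using (hasDerivWithinAt_pow 2 y (s := S)).fun_mul (hζ y hy)
    have h2 : HasDerivWithinAt (fun z : ℝ => z + z ^ 2 * ζ z)
        (1 + ((2:ℝ) * y ^ 1 * ζ y + y ^ 2 * ζ' y)) S y :=
      (hasDerivWithinAt_id y S).add h1
    have h3 : HasDerivWithinAt (fun z : ℝ => (z + z ^ 2 * ζ z) / h)
        ((1 + ((2:ℝ) * y ^ 1 * ζ y + y ^ 2 * ζ' y)) / h) S y := h2.div_const h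
    have h4 := HasDerivAt.comp_hasDerivWithinAt (x := y)
      (hh := h3) (hh₂ := hf ((y + y ^ 2 * ζ y) / h))
    have h5' : HasDerivWithinAt (fun z : ℝ => z / h) (1 / h) S y := by
      simpa using (hasDerivWithinAt_id y S).div_const h
    have h5 := HasDerivAt.comp_hasDerivWithinAt (x := y) (hh := h5') (hh₂ := hf (y / h))
    have h6 : HasDerivWithinAt
        (fun z => χ z * (f ((z + z ^ 2 * ζ z) / h) - f (z / h))) (D y) S y :=
      ((hχ y).hasDerivWithinAt).mul (h4.sub h5)
    exact h6.derivWithin (uniqueDiffOn_Icc hA y hy)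
  -- Step B : pointwise bound on (0, A]
  have hbound : ∀ y ∈ Set.Ioc (0:ℝ) A, |D y| ≤ M * (1 + η * y / h) ^ (-δ) := by
    intro y hy
    obtain ⟨hy0, hyA⟩ := hy
    have hyS : y ∈ S := ⟨hy0.le, hyA⟩
    set r : ℝ := 1 + η * y / h with hrdef
    have hm0 : (0:ℝ) < η * y / h := by positivity
    have hr0 : (0:ℝ) < r := by rw [hrdef]; positivity
    have hρ0 : (0:ℝ) ≤ r ^ (-δ) := (Real.rpow_pos_of_pos hr0 _).le
    -- both arguments are ≥ η y / h
    have hu_ge : η * y / h ≤ (y + y^2*ζ y) / h := by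
      have h1 : η * y ≤ y + y^2*ζ y := by nlinarith [hζη y hyS]
      gcongr
    have hv_ge : η * y / h ≤ y / h := by
      have h1 : η * y ≤ y := by nlinarith
      gcongr
    -- bounds on f', f'' at points ≥ η y / h
    have hf'bd : ∀ x : ℝ, η * y / h ≤ x → |f' x| ≤ C₀ * r ^ (-1 - δ) := by
      intro x hx
      refine (hf'b x).trans (mul_le_mul_of_nonneg_left ?_ hC₀.le)
      refine Real.rpow_le_rpow_of_nonpos hr0 ?_ (by linarith)
      have : 0 ≤ x := le_trans hm0.le hx
      rw [abs_of_nonneg this]; rw [hrdef]; linarith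
    have hf''bd : ∀ x : ℝ, η * y / h ≤ x → |f'' x| ≤ C₀ * r ^ (-2 - δ) := by
      intro x hx
      refine (hf''b x).trans (mul_le_mul_of_nonneg_left ?_ hC₀.le)
      refine Real.rpow_le_rpow_of_nonpos hr0 ?_ (by linarith)
      have : 0 ≤ x := le_trans hm0.le hx
      rw [abs_of_nonneg this]; rw [hrdef]; linarith
    -- mean value estimates
    have hdiffeq : (y + y^2*ζ y)/h - y/h = y^2 * ζ y / h := by ring
    have hdiffabs : |(y + y^2*ζ y)/h - y/h| ≤ K * y^2 / h := by
      rw [hdiffeq, abs_div, abs_of_pos hh0, abs_mul, abs_of_nonneg (sq_nonneg y)]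
      have hb : y^2 * |ζ y| ≤ K * y^2 := by nlinarith [hKζ y hyS, sq_nonneg y, abs_nonneg (ζ y)]
      gcongr
    have hmvt1 : |f ((y + y^2*ζ y)/h) - f (y/h)| ≤ C₀ * r ^ (-1 - δ) * (K * y^2 / h) :=
      le_trans (mvt_abs_bound hf hf'bd hv_ge hu_ge)
        (mul_le_mul_of_nonneg_left hdiffabs (by positivity))
    have hmvt2 : |f' ((y + y^2*ζ y)/h) - f' (y/h)| ≤ C₀ * r ^ (-2 - δ) * (K * y^2 / h) :=
      le_trans (mvt_abs_bound hf' hf''bd hv_ge hu_ge)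
        (mul_le_mul_of_nonneg_left hdiffabs (by positivity))
    -- power splitting
    have he1 : r ^ (-1 - δ) = r⁻¹ * r ^ (-δ) := by
      rw [show (-1 - δ : ℝ) = (-1) + (-δ) by ring, Real.rpow_add hr0, Real.rpow_neg_one]
    have he2 : r ^ (-2 - δ) = r⁻¹ * r⁻¹ * r ^ (-δ) := by
      rw [show (-2 - δ : ℝ) = (-1) + ((-1) + (-δ)) by ring, Real.rpow_add hr0,
        Real.rpow_add hr0, Real.rpow_neg_one]; ring
    -- key quotient bound
    set q : ℝ := (y / h) * r⁻¹ with hqdef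
    have hq0 : 0 ≤ q := by rw [hqdef]; positivity
    have hhne : h ≠ 0 := hh0.ne'
    have hrne : r ≠ 0 := hr0.ne'
    have hq1 : q ≤ 1 / η := by
      have h1 : y / h ≤ r / η := by
        rw [le_div_iff₀ hη0, hrdef]
        have : y / h * η = η * y / h := by ring
        rw [this]; linarith
      calc q ≤ (r / η) * r⁻¹ := by
              rw [hqdef]; exact mul_le_mul_of_nonneg_right h1 (by positivity)
        _ = 1 / η := by
            field_simp
    -- bounds on the W' factor
    have hW1 : |2*y^1*ζ y + y^2*ζ' y| ≤ y * K₃ := by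
      have b1 : |2*y^1*ζ y| ≤ 2 * y * K := by
        rw [abs_mul, abs_of_nonneg (by positivity : (0:ℝ) ≤ 2*y^1)]
        have := hKζ y hyS
        calc 2*y^1 * |ζ y| ≤ 2*y^1 * K := by gcongr
          _ = 2 * y * K := by ring
      have b2 : |y^2*ζ' y| ≤ y * (A * K) := by
        rw [abs_mul, abs_of_nonneg (sq_nonneg y)]
        have := hKζ' y hyS
        calc y^2 * |ζ' y| ≤ y^2 * K := by gcongr
          _ = y * (y * K) := by ring
          _ ≤ y * (A * K) := by gcongr
      calc |2*y^1*ζ y + y^2*ζ' y| ≤ |2*y^1*ζ y| + |y^2*ζ' y| := abs_add_le _ _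
        _ ≤ 2*y*K + y*(A*K) := add_le_add b1 b2
        _ = y * K₃ := by rw [hK₃def]; ring
    have hW2 : |1 + (2*y^1*ζ y + y^2*ζ' y)| ≤ K₂ := by
      calc |1 + (2*y^1*ζ y + y^2*ζ' y)| ≤ |(1:ℝ)| + |2*y^1*ζ y + y^2*ζ' y| := abs_add_le _ _
        _ ≤ 1 + y * K₃ := by rw [abs_one]; gcongr
        _ ≤ 1 + A * K₃ := by gcongr
        _ = K₂ := by rw [hK₂def]
    -- assemble
    have hχ'y : |χ' y| ≤ K := hKχ' y hyS
    have hχy : |χ y| ≤ 1 := by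
      rw [abs_of_nonneg (hχ01 y).1]; exact (hχ01 y).2
    have hsplit : f' ((y + y^2*ζ y)/h) * ((1 + (2*y^1*ζ y + y^2*ζ' y))/h) - f' (y/h) * (1/h)
        = (f' ((y + y^2*ζ y)/h) - f' (y/h)) * ((1 + (2*y^1*ζ y + y^2*ζ' y))/h)
          + f' (y/h) * ((2*y^1*ζ y + y^2*ζ' y)/h) := by ring
    have hterm1 : |χ' y * (f ((y + y^2*ζ y)/h) - f (y/h))| ≤ (C₀*K*K*A/η) * r ^ (-δ) := by
      rw [abs_mul]
      calc |χ' y| * |f ((y + y^2*ζ y)/h) - f (y/h)|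
          ≤ K * (C₀ * r ^ (-1 - δ) * (K * y^2 / h)) := by
            refine mul_le_mul hχ'y hmvt1 (abs_nonneg _) hK0.le
        _ = (C₀*K*K) * (y * q) * r ^ (-δ) := by rw [he1, hqdef]; field_simp
        _ ≤ (C₀*K*K) * (A * (1/η)) * r ^ (-δ) := by gcongr
        _ = (C₀*K*K*A/η) * r ^ (-δ) := by field_simp
    have hterm2 : |(f' ((y + y^2*ζ y)/h) - f' (y/h)) * ((1 + (2*y^1*ζ y + y^2*ζ' y))/h)|
        ≤ (C₀*K*K₂/η^2) * r ^ (-δ) := by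
      rw [abs_mul, abs_div, abs_of_pos hh0]
      calc |f' ((y + y^2*ζ y)/h) - f' (y/h)| * (|1 + (2*y^1*ζ y + y^2*ζ' y)| / h)
          ≤ (C₀ * r ^ (-2 - δ) * (K * y^2 / h)) * (K₂ / h) := by
            refine mul_le_mul hmvt2 (by gcongr) (by positivity) (by positivity)
        _ = (C₀*K*K₂) * (q * q) * r ^ (-δ) := by rw [he2, hqdef]; field_simp
        _ ≤ (C₀*K*K₂) * ((1/η) * (1/η)) * r ^ (-δ) := by gcongr
        _ = (C₀*K*K₂/η^2) * r ^ (-δ) := by field_simp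
    have hterm3 : |f' (y/h) * ((2*y^1*ζ y + y^2*ζ' y)/h)| ≤ (C₀*K₃/η) * r ^ (-δ) := by
      rw [abs_mul, abs_div, abs_of_pos hh0]
      calc |f' (y/h)| * (|2*y^1*ζ y + y^2*ζ' y| / h)
          ≤ (C₀ * r ^ (-1 - δ)) * (y * K₃ / h) := by
            refine mul_le_mul (hf'bd _ hv_ge) (by gcongr) (by positivity) (by positivity)
        _ = (C₀*K₃) * q * r ^ (-δ) := by rw [he1, hqdef]; field_simp
        _ ≤ (C₀*K₃) * (1/η) * r ^ (-δ) := by gcongr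
        _ = (C₀*K₃/η) * r ^ (-δ) := by field_simp
    calc |D y| ≤ |χ' y * (f ((y + y^2*ζ y)/h) - f (y/h))| +
          |χ y * (f' ((y + y^2*ζ y)/h) * ((1 + (2*y^1*ζ y + y^2*ζ' y))/h) - f' (y/h) * (1/h))| := by
            rw [hDdef]; exact abs_add_le _ _
      _ ≤ (C₀*K*K*A/η) * r ^ (-δ) + 1 *
            ((C₀*K*K₂/η^2) * r ^ (-δ) + (C₀*K₃/η) * r ^ (-δ)) := by
          refine add_le_add hterm1 ?_
          rw [abs_mul]
          refine mul_le_mul hχy ?_ (abs_nonneg _) zero_le_one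
          rw [hsplit]
          exact le_trans (abs_add_le _ _) (add_le_add hterm2 hterm3)
      _ = M * r ^ (-δ) := by rw [hMdef]; ring
  -- Step C : continuity of D on S
  have hucont : ContinuousOn (fun y : ℝ => (y + y^2*ζ y)/h) S := by
    apply ContinuousOn.div_const
    exact (continuousOn_id.add ((continuousOn_id.pow 2).mul hζc))
  have hDcont : ContinuousOn D S := by
    rw [hDdef]
    refine ContinuousOn.add ?_ ?_
    · exact (hχ'cont.continuousOn).mul
        ((hfc.comp_continuousOn hucont).sub
          (hfc.comp_continuousOn (continuousOn_id.div_const h)))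
    · refine (hχc.continuousOn).mul (ContinuousOn.sub ?_ ?_)
      · refine (hf'c.comp_continuousOn hucont).mul (ContinuousOn.div_const ?_ h)
        refine continuousOn_const.add (ContinuousOn.add ?_ ?_)
        · exact (continuousOn_const.mul (continuousOn_id.pow 1)).mul hζc
        · exact (continuousOn_id.pow 2).mul hζ'cont
      · exact (hf'c.comp_continuousOn (continuousOn_id.div_const h)).mul continuousOn_const
  -- rewrite the integral
  have hIeq : (∫ y in (0:ℝ)..A,
      |derivWithin (fun y => χ y * (f ((y + y ^ 2 * ζ y) / h) - f (y / h))) S y| ^ 2)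
      = ∫ y in (0:ℝ)..A, |D y| ^ 2 := by
    refine integral_congr fun y hy => ?_
    rw [Set.uIcc_of_le hA.le] at hy
    rw [hderiv y hy]
  rw [hIeq]
  -- integrability
  have hInt1 : IntervalIntegrable (fun y => |D y| ^ 2) volume 0 A := by
    apply ContinuousOn.intervalIntegrable
    rw [Set.uIcc_of_le hA.le]
    exact (hDcont.abs).pow 2
  have hInt2 : IntervalIntegrable
      (fun y : ℝ => M^2 * η ^ (-(2*δ)) * h ^ (2*δ) * y ^ (-(2*δ))) volume 0 A := by
    exact (intervalIntegrable_rpow' (by linarith)).const_mul _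
  -- pointwise domination a.e.
  have hae : (fun y => |D y| ^ 2) ≤ᵐ[volume.restrict (Set.Icc (0:ℝ) A)]
      (fun y : ℝ => M^2 * η ^ (-(2*δ)) * h ^ (2*δ) * y ^ (-(2*δ))) := by
    rw [← Measure.restrict_congr_set MeasureTheory.Ioc_ae_eq_Icc]
    refine ae_restrict_of_forall_mem measurableSet_Ioc ?_
    intro y hy
    obtain ⟨hy0, hyA⟩ := hy
    set r : ℝ := 1 + η * y / h with hrdef
    have hr0 : (0:ℝ) < r := by rw [hrdef]; positivity
    have hm0 : (0:ℝ) < η * y / h := by positivity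
    have h1 : |D y| ^ 2 ≤ (M * r ^ (-δ)) ^ 2 := by
      have := hbound y ⟨hy0, hyA⟩
      exact pow_le_pow_left₀ (abs_nonneg _) this 2
    have h2 : (M * r ^ (-δ)) ^ 2 = M ^ 2 * r ^ (-(2*δ)) := by
      rw [mul_pow, pow_two (r ^ (-δ)), ← Real.rpow_add hr0, show (-δ + -δ : ℝ) = -(2*δ) by ring]
    have h3 : r ^ (-(2*δ)) ≤ (η * y / h) ^ (-(2*δ)) := by
      refine Real.rpow_le_rpow_of_nonpos hm0 (by rw [hrdef]; linarith) (by linarith)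
    have h4 : (η * y / h) ^ (-(2*δ)) = η ^ (-(2*δ)) * h ^ (2*δ) * y ^ (-(2*δ)) := by
      rw [div_eq_mul_inv, Real.mul_rpow (by positivity) (by positivity),
        Real.mul_rpow hη0.le hy0.le, Real.inv_rpow hh0.le, Real.rpow_neg hh0.le,
        inv_inv]
      ring
    calc |D y| ^ 2 ≤ (M * r ^ (-δ)) ^ 2 := h1
      _ = M ^ 2 * r ^ (-(2*δ)) := h2
      _ ≤ M ^ 2 * (η * y / h) ^ (-(2*δ)) := by gcongr
      _ = M^2 * η ^ (-(2*δ)) * h ^ (2*δ) * y ^ (-(2*δ)) := by rw [h4]; ring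
  have hmono := integral_mono_ae_restrict hA.le hInt1 hInt2 hae
  refine hmono.trans ?_
  -- compute the right-hand integral
  have hcomp : (∫ y in (0:ℝ)..A, M^2 * η ^ (-(2*δ)) * h ^ (2*δ) * y ^ (-(2*δ)))
      = M^2 * η ^ (-(2*δ)) * h ^ (2*δ) * (A ^ (1 - 2*δ) / (1 - 2*δ)) := by
    rw [intervalIntegral.integral_const_mul, integral_rpow (Or.inl (by linarith))]
    rw [show (-(2*δ) + 1 : ℝ) = 1 - 2*δ by ring,
      Real.zero_rpow (by linarith : (1 - 2*δ : ℝ) ≠ 0), sub_zero]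
  rw [hcomp]
  have : M^2 * η ^ (-(2*δ)) * h ^ (2*δ) * (A ^ (1 - 2*δ) / (1 - 2*δ))
      = (M^2 * η ^ (-(2*δ)) * A ^ (1 - 2*δ) / (1 - 2*δ)) * h ^ (2*δ) := by ring
  rw [this]
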